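/- Let V be a finite-dimensional complex inner product space of complex dimension n (inner product ⟨·,·⟩ conjugate-linear in the first argument), with Borel σ-algebra and additive Haar measure μ, and let Ω = {v ∈ V : ‖v‖ < 1} be the open unit ball. Then for all complex-linear functionals θ, φ : V → ℂ with Riesz representatives x_θ, x_φ ∈ V (characterized by θ(v) = ⟨x_θ, v⟩ and φ(v) = ⟨x_φ, v⟩ for all v), one has ((n+1)/μ(Ω)) · ∫_Ω θ(η) · conj(φ(η)) dμ(η) = ⟨x_θ, x_φ⟩. -/

import Mathlib

open MeasureTheory
open scoped ComplexInnerProductSpace ENNReal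

section Aux

variable {V : Type*} [NormedAddCommGroup V] [InnerProductSpace ℂ V] [FiniteDimensional ℂ V]
  [MeasurableSpace V] [BorelSpace V]

/-- Any complex-linear isometry preserves any additive Haar measure. -/
lemma auxBL_measurePreserving (μ : Measure V) [μ.IsAddHaarMeasure] (f : V ≃ₗᵢ[ℂ] V) :
    MeasurePreserving f μ μ := by
  refine ⟨f.continuous.measurable, ?_⟩
  haveI hHaar : (μ.map f).IsAddHaarMeasure := by
    have h := f.toLinearEquiv.toContinuousLinearEquiv.isAddHaarMeasure_map μ
    have : (⇑f.toLinearEquiv.toContinuousLinearEquiv : V → V) = ⇑f := rfl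
    rwa [this] at h
  have h2 : μ.map f = (Measure.addHaarScalarFactor (μ.map f) μ) • μ :=
    Measure.isAddLeftInvariant_eq_smul _ _
  have hpre : f ⁻¹' Metric.ball (0 : V) 1 = Metric.ball (0 : V) 1 := by
    ext x
    simp [mem_ball_zero_iff, f.norm_map]
  have hball : (μ.map f) (Metric.ball (0 : V) 1) = μ (Metric.ball (0 : V) 1) := by
    rw [Measure.map_apply f.continuous.measurable measurableSet_ball, hpre]
  have hb0 : μ (Metric.ball (0 : V) 1) ≠ 0 :=
    (Metric.measure_ball_pos μ 0 one_pos).ne'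
  have hbt : μ (Metric.ball (0 : V) 1) ≠ ⊤ := measure_ball_lt_top.ne
  have hc : (Measure.addHaarScalarFactor (μ.map f) μ : ℝ≥0∞) = 1 := by
    have := hball
    rw [h2] at this
    simp only [Measure.smul_apply, smul_eq_mul] at this
    exact (ENNReal.mul_eq_right hb0 hbt).mp this
  rw [h2]
  ext s hs
  simp [Measure.smul_apply, hc]

/-- Substitution by a linear isometry in an integral over the unit ball. -/
lemma auxBL_integral_comp (μ : Measure V) [μ.IsAddHaarMeasure] (f : V ≃ₗᵢ[ℂ] V) (g : V → ℂ) :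
    ∫ η in Metric.ball (0 : V) 1, g (f η) ∂μ = ∫ η in Metric.ball (0 : V) 1, g η ∂μ := by
  have hemb : MeasurableEmbedding (⇑f) := by
    have := f.toHomeomorph.measurableEmbedding
    rwa [show (⇑f.toHomeomorph : V → V) = ⇑f from rfl] at this
  have h := (auxBL_measurePreserving μ f).setIntegral_preimage_emb hemb g (Metric.ball 0 1)
  have hpre : f ⁻¹' Metric.ball (0 : V) 1 = Metric.ball (0 : V) 1 := by
    ext x
    simp [mem_ball_zero_iff, f.norm_map]
  rwa [hpre] at h

lemma auxBL_integrable (μ : Measure V) [μ.IsAddHaarMeasure] (x y : V) :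
    IntegrableOn (fun η : V => ⟪x, η⟫ * (starRingEnd ℂ) ⟪y, η⟫) (Metric.ball (0 : V) 1) μ := by
  have hcont : Continuous fun η : V => ⟪x, η⟫ * (starRingEnd ℂ) ⟪y, η⟫ := by
    exact ((continuous_const.inner continuous_id).mul
      (continuous_star.comp (continuous_const.inner continuous_id)))
  exact (hcont.continuousOn.integrableOn_compact (isCompact_closedBall 0 1)).mono_set
    Metric.ball_subset_closedBall

lemma auxBL_offdiag (μ : Measure V) [μ.IsAddHaarMeasure] {n : ℕ}
    (b : OrthonormalBasis (Fin n) ℂ V) {i j : Fin n} (hij : i ≠ j) :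
    ∫ η in Metric.ball (0 : V) 1, ⟪b i, η⟫ * (starRingEnd ℂ) ⟪b j, η⟫ ∂μ = 0 := by
  set R : V ≃ₗᵢ[ℂ] V := Submodule.reflection ((ℂ ∙ (b j))ᗮ) with hR
  have hRj : R (b j) = - b j := Submodule.reflection_orthogonalComplement_singleton_eq_neg (b j)
  have hRi : R (b i) = b i := Submodule.reflection_mem_subspace_eq_self (by
    rw [Submodule.mem_orthogonal_singleton_iff_inner_right]
    exact b.orthonormal.2 hij.symm)
  have h1 : ∀ η, ⟪b i, R η⟫ = ⟪b i, η⟫ := fun η => by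
    conv_lhs => rw [← hRi]
    exact R.inner_map_map (b i) η
  have h2 : ∀ η, ⟪b j, R η⟫ = -⟪b j, η⟫ := fun η => by
    have h := R.inner_map_map (b j) η
    rw [hRj, inner_neg_left] at h
    linear_combination -h
  have key := auxBL_integral_comp μ R (fun η => ⟪b i, η⟫ * (starRingEnd ℂ) ⟪b j, η⟫)
  have heq : (fun η => ⟪b i, R η⟫ * (starRingEnd ℂ) ⟪b j, R η⟫)
      = fun η => -(⟪b i, η⟫ * (starRingEnd ℂ) ⟪b j, η⟫) := by
    funext η
    rw [h1, h2, map_neg]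
    ring
  rw [heq, integral_neg] at key
  linear_combination (-1/2 : ℂ) * key

lemma auxBL_diag (μ : Measure V) [μ.IsAddHaarMeasure] {n : ℕ}
    (b : OrthonormalBasis (Fin n) ℂ V) (i k : Fin n) :
    ∫ η in Metric.ball (0 : V) 1, ⟪b i, η⟫ * (starRingEnd ℂ) ⟪b i, η⟫ ∂μ
      = ∫ η in Metric.ball (0 : V) 1, ⟪b k, η⟫ * (starRingEnd ℂ) ⟪b k, η⟫ ∂μ := by
  have hON : Orthonormal ℂ ⇑b.toBasis := by rw [b.coe_toBasis]; exact b.orthonormal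
  set U : V ≃ₗᵢ[ℂ] V := hON.equiv hON (Equiv.swap i k) with hU
  have hUk : U (b k) = b i := by
    have h := hON.equiv_apply hON (Equiv.swap i k) k
    rw [b.coe_toBasis] at h
    rw [h, Equiv.swap_apply_right]
  have h1 : ∀ η, ⟪b i, U η⟫ = ⟪b k, η⟫ := fun η => by
    conv_lhs => rw [← hUk]
    exact U.inner_map_map (b k) η
  have key := auxBL_integral_comp μ U (fun η => ⟪b i, η⟫ * (starRingEnd ℂ) ⟪b i, η⟫)
  have heq : (fun η => ⟪b i, U η⟫ * (starRingEnd ℂ) ⟪b i, U η⟫)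
      = fun η => ⟪b k, η⟫ * (starRingEnd ℂ) ⟪b k, η⟫ := by
    funext η
    rw [h1]
  rw [heq] at key
  exact key.symm

lemma auxBL_radial (μ : Measure V) [μ.IsAddHaarMeasure] [Nontrivial V] :
    ∫ η in Metric.ball (0 : V) 1, ‖η‖ ^ 2 ∂μ
      = (Module.finrank ℝ V : ℝ) / ((Module.finrank ℝ V : ℝ) + 2)
        * (μ (Metric.ball (0 : V) 1)).toReal := by
  have hd : 0 < Module.finrank ℝ V := Module.finrank_pos
  set d := Module.finrank ℝ V with hdd
  set f : ℝ → ℝ := Set.indicator (Set.Iio 1) (fun r => r ^ 2) with hf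
  have h0 : ∫ x, f ‖x‖ ∂μ = ∫ η in Metric.ball (0 : V) 1, ‖η‖ ^ 2 ∂μ := by
    rw [← integral_indicator measurableSet_ball]
    congr 1
    funext x
    by_cases hx : ‖x‖ < 1
    · simp [hf, Set.indicator, hx, mem_ball_zero_iff]
    · simp [hf, Set.indicator, hx, mem_ball_zero_iff]
  rw [← h0, integral_fun_norm_addHaar μ f]
  have hind : ∀ y : ℝ, y ^ (d - 1) • f y
      = Set.indicator (Set.Iio 1) (fun y => y ^ (d - 1) * y ^ 2) y := by
    intro y
    by_cases hy : y < 1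
    · simp [hf, Set.indicator, hy]
    · simp [hf, Set.indicator, hy]
  have h1 : ∫ y in Set.Ioi (0 : ℝ), y ^ (d - 1) • f y = 1 / (d + 2) := by
    rw [show (fun y : ℝ => y ^ (d - 1) • f y)
        = fun y => Set.indicator (Set.Iio 1) (fun y => y ^ (d - 1) * y ^ 2) y from funext hind]
    rw [setIntegral_indicator measurableSet_Iio, Set.Ioi_inter_Iio]
    rw [setIntegral_congr_fun measurableSet_Ioo
      (g := fun y : ℝ => y ^ (d + 1)) (fun y hy => by
        rw [← pow_add]
        congr 1
        omega)]
    rw [← integral_Ioc_eq_integral_Ioo, ← intervalIntegral.integral_of_le zero_le_one,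
      integral_pow]
    rw [one_pow, zero_pow (by omega)]
    push_cast
    ring
  rw [h1, nsmul_eq_mul, smul_eq_mul]
  field_simp
  rfl

lemma auxBL_trace (μ : Measure V) [μ.IsAddHaarMeasure] {n : ℕ}
    (b : OrthonormalBasis (Fin n) ℂ V) :
    ∑ i : Fin n, ∫ η in Metric.ball (0 : V) 1, ⟪b i, η⟫ * (starRingEnd ℂ) ⟪b i, η⟫ ∂μ
      = ((∫ η in Metric.ball (0 : V) 1, ‖η‖ ^ 2 ∂μ : ℝ) : ℂ) := by
  rw [← integral_finset_sum _ (fun i _ => auxBL_integrable μ (b i) (b i))]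
  have hcast : ((∫ η in Metric.ball (0 : V) 1, ‖η‖ ^ 2 ∂μ : ℝ) : ℂ)
      = ∫ η in Metric.ball (0 : V) 1, ((‖η‖ ^ 2 : ℝ) : ℂ) ∂μ :=
    (integral_ofReal (𝕜 := ℂ)).symm
  rw [hcast]
  congr 1
  funext η
  have h : ∀ i : Fin n, ⟪b i, η⟫ * (starRingEnd ℂ) ⟪b i, η⟫ = ⟪η, b i⟫ * ⟪b i, η⟫ := by
    intro i
    rw [inner_conj_symm]
    ring
  rw [Finset.sum_congr rfl (fun i _ => h i), b.sum_inner_mul_inner η η,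
    inner_self_eq_norm_sq_to_K]
  norm_cast

end Aux

/-- On a finite-dimensional complex inner product space of complex
dimension `n`, the dual Binet–Legendre form of the open unit ball evaluated at two
functionals equals the inner product of their Riesz representatives. -/
theorem dualBL_unitBall_eq_inner
    {V : Type*} [NormedAddCommGroup V] [InnerProductSpace ℂ V] [FiniteDimensional ℂ V]
    [MeasurableSpace V] [BorelSpace V]
    (μ : Measure V) [μ.IsAddHaarMeasure]
    (n : ℕ) (hn : Module.finrank ℂ V = n)
    (θ φ : V →ₗ[ℂ] ℂ) (xθ xφ : V)
    (hθ : ∀ v : V, θ v = ⟪xθ, v⟫) (hφ : ∀ v : V, φ v = ⟪xφ, v⟫) :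
    (((n : ℂ) + 1) / ((μ {v : V | ‖v‖ < 1}).toReal : ℂ)) *
        ∫ η in {v : V | ‖v‖ < 1}, θ η * (starRingEnd ℂ) (φ η) ∂μ = ⟪xθ, xφ⟫ := by
  have hset : {v : V | ‖v‖ < 1} = Metric.ball (0 : V) 1 := by
    ext v; simp [mem_ball_zero_iff]
  rw [hset]
  simp only [hθ, hφ]
  rcases Nat.eq_zero_or_pos n with hn0 | hnpos
  · subst hn0
    haveI : Subsingleton V := Module.finrank_zero_iff.mp hn
    have hx : xφ = (0 : V) := Subsingleton.elim _ _
    rw [hx]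
    simp [inner_zero_left]
  · -- main case : n ≥ 1
    haveI : Nontrivial V := Module.finrank_pos_iff.mp (by rw [hn]; exact hnpos)
    set i0 : Fin n := ⟨0, hnpos⟩ with hi0
    set b : OrthonormalBasis (Fin n) ℂ V :=
      (stdOrthonormalBasis ℂ V).reindex (finCongr hn) with hb
    set m : ℝ := (μ (Metric.ball (0 : V) 1)).toReal with hm
    have hm0 : m ≠ 0 := by
      rw [hm]
      exact ENNReal.toReal_ne_zero.mpr
        ⟨(Metric.measure_ball_pos μ 0 one_pos).ne', measure_ball_lt_top.ne⟩
    set c : ℂ := ∫ η in Metric.ball (0 : V) 1, ⟪b i0, η⟫ * (starRingEnd ℂ) ⟪b i0, η⟫ ∂μ with hc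
    have hn' : (n : ℂ) ≠ 0 := Nat.cast_ne_zero.mpr hnpos.ne'
    have hn1 : (n : ℂ) + 1 ≠ 0 := by
      have := Nat.cast_add_one_ne_zero (R := ℂ) n
      push_cast at this
      exact this
    have hdim : Module.finrank ℝ V = 2 * n := by
      have h := Module.finrank_mul_finrank ℝ ℂ V
      rw [Complex.finrank_real_complex, hn] at h
      omega
    have htrace : (n : ℂ) * c = (((2 * n : ℝ) / (2 * n + 2) * m : ℝ) : ℂ) := by
      have h1 := auxBL_trace μ b
      rw [Finset.sum_congr rfl (fun i _ => auxBL_diag μ b i i0), Finset.sum_const,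
        Finset.card_univ, Fintype.card_fin, auxBL_radial μ, hdim] at h1
      rw [nsmul_eq_mul] at h1
      rw [h1]
      norm_cast
    have hc_val : c = (m : ℂ) / ((n : ℂ) + 1) := by
      have h2 : (2 * (n : ℂ) + 2) ≠ 0 := fun h => hn1 (by linear_combination h / 2)
      have htrace' : (n : ℂ) * c * (2 * (n : ℂ) + 2) = 2 * (n : ℂ) * (m : ℂ) := by
        rw [htrace]
        push_cast
        field_simp
      have hkey : 2 * (n : ℂ) * (c * ((n : ℂ) + 1) - (m : ℂ)) = 0 := by
        linear_combination htrace'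
      have h2n : 2 * (n : ℂ) ≠ 0 := by simpa using hn'
      have hfin := (mul_eq_zero.mp hkey).resolve_left h2n
      rw [eq_div_iff hn1]
      linear_combination hfin
    have hexp : ∫ η in Metric.ball (0 : V) 1, ⟪xθ, η⟫ * (starRingEnd ℂ) ⟪xφ, η⟫ ∂μ
        = ⟪xθ, xφ⟫ * c := by
      have hfun : (fun η : V => ⟪xθ, η⟫ * (starRingEnd ℂ) ⟪xφ, η⟫)
          = fun η : V => ∑ i : Fin n, ∑ j : Fin n,
              (⟪xθ, b i⟫ * (starRingEnd ℂ) ⟪xφ, b j⟫)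
                * (⟪b i, η⟫ * (starRingEnd ℂ) ⟪b j, η⟫) := by
        funext η
        rw [← b.sum_inner_mul_inner xθ η, ← b.sum_inner_mul_inner xφ η, map_sum,
          Finset.sum_mul_sum]
        refine Finset.sum_congr rfl fun i _ => Finset.sum_congr rfl fun j _ => ?_
        rw [map_mul]
        ring
      rw [hfun, integral_finset_sum _ (fun i _ => integrable_finset_sum _
        (fun j _ => (auxBL_integrable μ (b i) (b j)).const_mul _))]
      have hsum : ∀ i : Fin n,
          ∫ η in Metric.ball (0 : V) 1, ∑ j : Fin n,
            (⟪xθ, b i⟫ * (starRingEnd ℂ) ⟪xφ, b j⟫)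
              * (⟪b i, η⟫ * (starRingEnd ℂ) ⟪b j, η⟫) ∂μ
          = ⟪xθ, b i⟫ * (starRingEnd ℂ) ⟪xφ, b i⟫ * c := by
        intro i
        rw [integral_finset_sum _ (fun j _ => (auxBL_integrable μ (b i) (b j)).const_mul _)]
        rw [Finset.sum_eq_single i (fun j _ hji => by
            rw [integral_const_mul, auxBL_offdiag μ b (Ne.symm hji), mul_zero])
          (fun h => absurd (Finset.mem_univ i) h)]
        rw [integral_const_mul, auxBL_diag μ b i i0]
      rw [Finset.sum_congr rfl (fun i _ => hsum i), ← Finset.sum_mul]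
      congr 1
      have h3 : ∀ i : Fin n, ⟪xθ, b i⟫ * (starRingEnd ℂ) ⟪xφ, b i⟫
          = ⟪xθ, b i⟫ * ⟪b i, xφ⟫ := fun i => by rw [inner_conj_symm]
      rw [Finset.sum_congr rfl (fun i _ => h3 i), b.sum_inner_mul_inner xθ xφ]
    rw [hexp, hc_val]
    have hm0' : (m : ℂ) ≠ 0 := by exact_mod_cast hm0
    field_simp
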